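/- Let (Ω, F, μ) be a probability space with a filtration 𝒻 indexed by ℕ, T a finite horizon, and Z : ℕ → Ω → ℝ an adapted process with each Z t bounded and measurable. Let U be the Snell envelope of Z. Then the optimal stopping problem over the finite horizon has a solution: the supremum of E[Z_τ] over all stopping times τ with τ ≤ T equals E[U 0], and it is attained by the stopping time τ*(ω) = min{s ≤ T | U s ω = Z s ω}. -/

import Mathlib

open MeasureTheory

section Aux

variable {Ω : Type*} {mΩ : MeasurableSpace Ω} {μ : Measure Ω} [IsProbabilityMeasure μ]

/-- Decomposition of `∫ Z_τ` as a finite sum of set integrals. -/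
lemma stmt6_sum_decomp (T : ℕ) (Z : ℕ → Ω → ℝ) (hZint : ∀ t, Integrable (Z t) μ)
    (𝒻 : Filtration ℕ mΩ) (τ : Ω → ℕ) (hτ : IsStoppingTime 𝒻 (fun ω => (τ ω : WithTop ℕ))) (hτT : ∀ ω, τ ω ≤ T) :
    ∫ ω, Z (τ ω) ω ∂μ = ∑ s ∈ Finset.Icc 0 T, ∫ ω in {ω | τ ω = s}, Z s ω ∂μ := by
  have hmeq : ∀ s, MeasurableSet {ω | τ ω = s} := fun s => 𝒻.le s _ (by simpa using hτ.measurableSet_eq s)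
  have h1 : (fun ω => Z (τ ω) ω)
      = fun ω => ∑ s ∈ Finset.Icc 0 T, Set.indicator {ω' | τ ω' = s} (Z s) ω := by
    funext ω
    rw [Finset.sum_eq_single_of_mem (τ ω) (by simp [hτT ω])]
    · rw [Set.indicator_of_mem (by simp : ω ∈ {ω' | τ ω' = τ ω})]
    · intro s _ hne
      exact Set.indicator_of_notMem (by simpa using fun h => hne h.symm) _
  rw [h1, integral_finset_sum _ (fun s _ => ((hZint s).indicator (hmeq s)))]
  exact Finset.sum_congr rfl fun s _ => integral_indicator (hmeq s)

/-- The key backward induction, equality version, under the hypotheses satisfied by `τ*`. -/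
lemma stmt6_key (𝒻 : Filtration ℕ mΩ) (T : ℕ) (Z U : ℕ → Ω → ℝ)
    (hZint : ∀ t, Integrable (Z t) μ)
    (hUint : ∀ t, t ≤ T → Integrable (U t) μ)
    (hUT : U T = Z T)
    (τ : Ω → ℕ) (hτ : IsStoppingTime 𝒻 (fun ω => (τ ω : WithTop ℕ))) (hτT : ∀ ω, τ ω ≤ T)
    (htouch : ∀ t, t ≤ T → ∀ ω, τ ω = t → Z t ω = U t ω)
    (hopt : ∀ t, t < T → ∀ ω, t + 1 ≤ τ ω → (μ[U (t + 1) | 𝒻 t]) ω = U t ω) :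
    ∀ t, t ≤ T →
      ∑ s ∈ Finset.Icc t T, ∫ ω in {ω | τ ω = s}, Z s ω ∂μ
        = ∫ ω in {ω | t ≤ τ ω}, U t ω ∂μ := by
  have hmeq : ∀ s, MeasurableSet {ω | τ ω = s} := fun s => 𝒻.le s _ (by simpa using hτ.measurableSet_eq s)
  have hmge' : ∀ t, MeasurableSet[𝒻 t] {ω | t + 1 ≤ τ ω} := by
    intro t
    have : {ω | t + 1 ≤ τ ω} = {ω | τ ω ≤ t}ᶜ := by
      ext ω; simp only [Set.mem_setOf_eq, Set.mem_compl_iff, not_le]; omega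
    rw [this]; exact (by simpa using hτ t : MeasurableSet[𝒻 t] {ω | τ ω ≤ t}).compl
  have hmge : ∀ t, MeasurableSet {ω | t ≤ τ ω} := by
    intro t
    rcases Nat.eq_zero_or_pos t with h0 | hpos
    · subst h0; simp
    · obtain ⟨u, rfl⟩ := Nat.exists_eq_add_of_le hpos
      exact 𝒻.le u _ (by simpa [Nat.add_comm] using hmge' u)
  -- base case
  have base : ∑ s ∈ Finset.Icc T T, ∫ ω in {ω | τ ω = s}, Z s ω ∂μ
      = ∫ ω in {ω | T ≤ τ ω}, U T ω ∂μ := by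
    have hset : {ω | τ ω = T} = {ω | T ≤ τ ω} := by
      ext ω; simp only [Set.mem_setOf_eq]
      exact ⟨fun h => h.ge, fun h => le_antisymm (hτT ω) h⟩
    simp [hUT, hset]
  -- inductive step
  have step : ∀ t, t < T →
      (∑ s ∈ Finset.Icc (t + 1) T, ∫ ω in {ω | τ ω = s}, Z s ω ∂μ
        = ∫ ω in {ω | t + 1 ≤ τ ω}, U (t + 1) ω ∂μ) →
      ∑ s ∈ Finset.Icc t T, ∫ ω in {ω | τ ω = s}, Z s ω ∂μ
        = ∫ ω in {ω | t ≤ τ ω}, U t ω ∂μ := by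
    intro t htT ih
    have hsplit : Finset.Icc t T = insert t (Finset.Icc (t + 1) T) := by
      ext x
      simp only [Finset.mem_Icc, Finset.mem_insert]
      omega
    rw [hsplit, Finset.sum_insert (by simp), ih]
    -- rewrite the two pieces as integrals of `U t`
    have e1 : ∫ ω in {ω | τ ω = t}, Z t ω ∂μ = ∫ ω in {ω | τ ω = t}, U t ω ∂μ :=
      setIntegral_congr_fun (hmeq t) (fun ω hω => htouch t (le_of_lt htT) ω hω)
    have e2 : ∫ ω in {ω | t + 1 ≤ τ ω}, U (t + 1) ω ∂μ
        = ∫ ω in {ω | t + 1 ≤ τ ω}, U t ω ∂μ := by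
      rw [← setIntegral_condExp (𝒻.le t) (hUint (t + 1) htT) (hmge' t)]
      exact setIntegral_congr_fun (hmge (t + 1)) (fun ω hω => hopt t htT ω hω)
    rw [e1, e2]
    have hunion : {ω | t ≤ τ ω} = {ω | τ ω = t} ∪ {ω | t + 1 ≤ τ ω} := by
      ext ω; simp only [Set.mem_setOf_eq, Set.mem_union]; omega
    have hdisj : Disjoint {ω | τ ω = t} {ω | t + 1 ≤ τ ω} := by
      rw [Set.disjoint_left]; intro ω h1 h2; simp only [Set.mem_setOf_eq] at h1 h2; omega
    rw [hunion, setIntegral_union hdisj (hmge (t + 1))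
      ((hUint t (le_of_lt htT)).integrableOn) ((hUint t (le_of_lt htT)).integrableOn)]
  -- downward induction
  have main : ∀ k t, t ≤ T → T - t ≤ k →
      ∑ s ∈ Finset.Icc t T, ∫ ω in {ω | τ ω = s}, Z s ω ∂μ
        = ∫ ω in {ω | t ≤ τ ω}, U t ω ∂μ := by
    intro k
    induction k with
    | zero =>
      intro t ht hk
      obtain rfl : t = T := by omega
      exact base
    | succ k ih =>
      intro t ht hk
      rcases eq_or_lt_of_le ht with h | h
      · subst h; exact base
      · exact step t h (ih (t + 1) h (by omega))
  exact fun t ht => main (T - t) t ht le_rfl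

/-- The key backward induction, inequality version, for an arbitrary stopping time. -/
lemma stmt6_key_le (𝒻 : Filtration ℕ mΩ) (T : ℕ) (Z U : ℕ → Ω → ℝ)
    (hZint : ∀ t, Integrable (Z t) μ)
    (hUint : ∀ t, t ≤ T → Integrable (U t) μ)
    (hUT : U T = Z T)
    (hZU : ∀ t, t ≤ T → ∀ ω, Z t ω ≤ U t ω)
    (hCU : ∀ t, t < T → ∀ ω, (μ[U (t + 1) | 𝒻 t]) ω ≤ U t ω)
    (τ : Ω → ℕ) (hτ : IsStoppingTime 𝒻 (fun ω => (τ ω : WithTop ℕ))) (hτT : ∀ ω, τ ω ≤ T) :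
    ∀ t, t ≤ T →
      ∑ s ∈ Finset.Icc t T, ∫ ω in {ω | τ ω = s}, Z s ω ∂μ
        ≤ ∫ ω in {ω | t ≤ τ ω}, U t ω ∂μ := by
  have hmeq : ∀ s, MeasurableSet {ω | τ ω = s} := fun s => 𝒻.le s _ (by simpa using hτ.measurableSet_eq s)
  have hmge' : ∀ t, MeasurableSet[𝒻 t] {ω | t + 1 ≤ τ ω} := by
    intro t
    have : {ω | t + 1 ≤ τ ω} = {ω | τ ω ≤ t}ᶜ := by
      ext ω; simp only [Set.mem_setOf_eq, Set.mem_compl_iff, not_le]; omega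
    rw [this]; exact (by simpa using hτ t : MeasurableSet[𝒻 t] {ω | τ ω ≤ t}).compl
  have hmge : ∀ t, MeasurableSet {ω | t ≤ τ ω} := by
    intro t
    rcases Nat.eq_zero_or_pos t with h0 | hpos
    · subst h0; simp
    · obtain ⟨u, rfl⟩ := Nat.exists_eq_add_of_le hpos
      exact 𝒻.le u _ (by simpa [Nat.add_comm] using hmge' u)
  have base : ∑ s ∈ Finset.Icc T T, ∫ ω in {ω | τ ω = s}, Z s ω ∂μ
      ≤ ∫ ω in {ω | T ≤ τ ω}, U T ω ∂μ := by
    have hset : {ω | τ ω = T} = {ω | T ≤ τ ω} := by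
      ext ω; simp only [Set.mem_setOf_eq]
      exact ⟨fun h => h.ge, fun h => le_antisymm (hτT ω) h⟩
    simp [hUT, hset]
  have step : ∀ t, t < T →
      (∑ s ∈ Finset.Icc (t + 1) T, ∫ ω in {ω | τ ω = s}, Z s ω ∂μ
        ≤ ∫ ω in {ω | t + 1 ≤ τ ω}, U (t + 1) ω ∂μ) →
      ∑ s ∈ Finset.Icc t T, ∫ ω in {ω | τ ω = s}, Z s ω ∂μ
        ≤ ∫ ω in {ω | t ≤ τ ω}, U t ω ∂μ := by
    intro t htT ih
    have hsplit : Finset.Icc t T = insert t (Finset.Icc (t + 1) T) := by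
      ext x
      simp only [Finset.mem_Icc, Finset.mem_insert]
      omega
    rw [hsplit, Finset.sum_insert (by simp)]
    have e1 : ∫ ω in {ω | τ ω = t}, Z t ω ∂μ ≤ ∫ ω in {ω | τ ω = t}, U t ω ∂μ :=
      setIntegral_mono_on ((hZint t).integrableOn)
        ((hUint t (le_of_lt htT)).integrableOn) (hmeq t)
        (fun ω _ => hZU t (le_of_lt htT) ω)
    have e2 : ∫ ω in {ω | t + 1 ≤ τ ω}, U (t + 1) ω ∂μ
        ≤ ∫ ω in {ω | t + 1 ≤ τ ω}, U t ω ∂μ := by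
      rw [← setIntegral_condExp (𝒻.le t) (hUint (t + 1) htT) (hmge' t)]
      exact setIntegral_mono_on (integrable_condExp.integrableOn)
        ((hUint t (le_of_lt htT)).integrableOn) (hmge (t + 1))
        (fun ω _ => hCU t htT ω)
    have hunion : {ω | t ≤ τ ω} = {ω | τ ω = t} ∪ {ω | t + 1 ≤ τ ω} := by
      ext ω; simp only [Set.mem_setOf_eq, Set.mem_union]; omega
    have hdisj : Disjoint {ω | τ ω = t} {ω | t + 1 ≤ τ ω} := by
      rw [Set.disjoint_left]; intro ω h1 h2; simp only [Set.mem_setOf_eq] at h1 h2; omega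
    calc (∫ ω in {ω | τ ω = t}, Z t ω ∂μ)
          + ∑ s ∈ Finset.Icc (t + 1) T, ∫ ω in {ω | τ ω = s}, Z s ω ∂μ
        ≤ (∫ ω in {ω | τ ω = t}, U t ω ∂μ) + ∫ ω in {ω | t + 1 ≤ τ ω}, U t ω ∂μ :=
          add_le_add (le_trans e1 le_rfl) (le_trans ih e2)
      _ = ∫ ω in {ω | t ≤ τ ω}, U t ω ∂μ := by
          rw [hunion, setIntegral_union hdisj (hmge (t + 1))
            ((hUint t (le_of_lt htT)).integrableOn) ((hUint t (le_of_lt htT)).integrableOn)]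
  have main : ∀ k t, t ≤ T → T - t ≤ k →
      ∑ s ∈ Finset.Icc t T, ∫ ω in {ω | τ ω = s}, Z s ω ∂μ
        ≤ ∫ ω in {ω | t ≤ τ ω}, U t ω ∂μ := by
    intro k
    induction k with
    | zero =>
      intro t ht hk
      obtain rfl : t = T := by omega
      exact base
    | succ k ih =>
      intro t ht hk
      rcases eq_or_lt_of_le ht with h | h
      · subst h; exact base
      · exact step t h (ih (t + 1) h (by omega))
  exact fun t ht => main (T - t) t ht le_rfl

end Aux

/-- Solution of the finite-horizon optimal stopping problem: the supremum of `E[Z_τ]` over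
stopping times `τ ≤ T` equals `E[U 0]`, and is attained by the first time the payoff touches
the Snell envelope. -/
theorem stmt6 {Ω : Type*} {mΩ : MeasurableSpace Ω} {μ : Measure Ω} [IsProbabilityMeasure μ]
    (𝒻 : Filtration ℕ mΩ) (T : ℕ) (Z : ℕ → Ω → ℝ)
    (hadapt : Adapted 𝒻 Z)
    (hmeas : ∀ t, Measurable (Z t))
    (hbdd : ∀ t, ∃ C : ℝ, ∀ ω, |Z t ω| ≤ C)
    (U : ℕ → Ω → ℝ)
    (hUT : U T = Z T)
    (hU : ∀ t < T, U t = fun ω => max (Z t ω) ((μ[U (t + 1) | 𝒻 t]) ω))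
    (τstar : Ω → ℕ)
    (hτstar : ∀ ω, τstar ω = sInf {s : ℕ | s ≤ T ∧ U s ω = Z s ω}) :
    IsStoppingTime 𝒻 (fun ω => (τstar ω : WithTop ℕ)) ∧ (∀ ω, τstar ω ≤ T) ∧
    (∫ ω, Z (τstar ω) ω ∂μ = ∫ ω, U 0 ω ∂μ) ∧
    (∀ τ : Ω → ℕ, IsStoppingTime 𝒻 (fun ω => (τ ω : WithTop ℕ)) → (∀ ω, τ ω ≤ T) →
      ∫ ω, Z (τ ω) ω ∂μ ≤ ∫ ω, U 0 ω ∂μ) := by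
  -- integrability of Z
  have hZint : ∀ t, Integrable (Z t) μ := by
    intro t
    obtain ⟨C, hC⟩ := hbdd t
    exact ⟨(hmeas t).aestronglyMeasurable,
      HasFiniteIntegral.of_bounded (C := C) (ae_of_all _ fun ω => by
        simpa [Real.norm_eq_abs] using hC ω)⟩
  -- measurability of U w.r.t. the filtration, and integrability, by downward induction
  have hUkey : ∀ k t, t ≤ T → T - t ≤ k →
      StronglyMeasurable[𝒻 t] (U t) ∧ Integrable (U t) μ := by
    intro k
    induction k with
    | zero =>
      intro t ht hk
      obtain rfl : t = T := by omega
      exact ⟨hUT ▸ (hadapt _).stronglyMeasurable, hUT ▸ hZint _⟩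
    | succ k ih =>
      intro t ht hk
      rcases eq_or_lt_of_le ht with h | h
      · subst h; exact ⟨hUT ▸ (hadapt _).stronglyMeasurable, hUT ▸ hZint _⟩
      · obtain ⟨hm1, hi1⟩ := ih (t + 1) h (by omega)
        constructor
        · rw [hU t h]
          exact ((hadapt t).max
            (stronglyMeasurable_condExp (m := 𝒻 t)).measurable).stronglyMeasurable
        · rw [hU t h]
          have h := (hZint t).sup (integrable_condExp (f := U (t + 1)) (m := 𝒻 t))
          have heq : (Z t ⊔ μ[U (t + 1) | 𝒻 t])
              = fun ω => max (Z t ω) ((μ[U (t + 1) | 𝒻 t]) ω) := by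
            funext ω
            simp [Pi.sup_apply]
          rwa [heq] at h
  have hUmeas : ∀ t, t ≤ T → StronglyMeasurable[𝒻 t] (U t) :=
    fun t ht => (hUkey (T - t) t ht le_rfl).1
  have hUint : ∀ t, t ≤ T → Integrable (U t) μ :=
    fun t ht => (hUkey (T - t) t ht le_rfl).2
  -- basic facts about τstar
  have hSne : ∀ ω, T ∈ {s : ℕ | s ≤ T ∧ U s ω = Z s ω} := by
    intro ω; exact ⟨le_rfl, by rw [hUT]⟩
  have hτT : ∀ ω, τstar ω ≤ T := by
    intro ω; rw [hτstar ω]; exact Nat.sInf_le (hSne ω)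
  have hτmem : ∀ ω, τstar ω ≤ T ∧ U (τstar ω) ω = Z (τstar ω) ω := by
    intro ω
    have : τstar ω ∈ {s : ℕ | s ≤ T ∧ U s ω = Z s ω} := by
      rw [hτstar ω]; exact Nat.sInf_mem ⟨T, hSne ω⟩
    exact this
  have hτnot : ∀ ω s, s < τstar ω → ¬(s ≤ T ∧ U s ω = Z s ω) := by
    intro ω s hs hmem
    have := Nat.sInf_le (s := {s : ℕ | s ≤ T ∧ U s ω = Z s ω}) hmem
    rw [← hτstar ω] at this; omega
  -- τstar is a stopping time
  have hst : IsStoppingTime 𝒻 (fun ω => (τstar ω : WithTop ℕ)) := by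
    intro t
    suffices MeasurableSet[𝒻 t] {ω | τstar ω ≤ t} by simpa using this
    have hset : {ω | τstar ω ≤ t} = ⋃ s ∈ Finset.range (t + 1),
        (if s ≤ T then {ω | U s ω = Z s ω} else ∅) := by
      ext ω
      simp only [Set.mem_setOf_eq, Set.mem_iUnion, Finset.mem_range]
      constructor
      · intro h
        refine ⟨τstar ω, by omega, ?_⟩
        rw [if_pos (hτmem ω).1]
        exact (hτmem ω).2
      · rintro ⟨s, hs, hmem⟩
        by_cases hsT : s ≤ T
        · rw [if_pos hsT] at hmem
          have : τstar ω ≤ s := by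
            by_contra hc
            exact hτnot ω s (by omega) ⟨hsT, hmem⟩
          omega
        · rw [if_neg hsT] at hmem; exact absurd hmem (Set.notMem_empty ω)
    rw [hset]
    have hmeasb : ∀ s ∈ Finset.range (t + 1),
        MeasurableSet[𝒻 t] (if s ≤ T then {ω | U s ω = Z s ω} else ∅) := by
      intro s hs
      rw [Finset.mem_range] at hs
      by_cases hsT : s ≤ T
      · rw [if_pos hsT]
        exact 𝒻.mono (Nat.lt_succ_iff.mp hs) _
          ((hUmeas s hsT).measurableSet_eq_fun (hadapt s).stronglyMeasurable)
      · rw [if_neg hsT]; exact @MeasurableSet.empty _ (𝒻 t)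
    exact Finset.measurableSet_biUnion _ hmeasb
  -- pointwise inequalities
  have hZU : ∀ t, t ≤ T → ∀ ω, Z t ω ≤ U t ω := by
    intro t ht ω
    rcases eq_or_lt_of_le ht with h | h
    · subst h; rw [hUT]
    · rw [hU t h]; exact le_max_left _ _
  have hCU : ∀ t, t < T → ∀ ω, (μ[U (t + 1) | 𝒻 t]) ω ≤ U t ω := by
    intro t ht ω
    rw [hU t ht]; exact le_max_right _ _
  -- τstar hypotheses for the equality lemma
  have htouch : ∀ t, t ≤ T → ∀ ω, τstar ω = t → Z t ω = U t ω := by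
    intro t ht ω hω
    have := (hτmem ω).2
    rw [hω] at this
    exact this.symm
  have hopt : ∀ t, t < T → ∀ ω, t + 1 ≤ τstar ω → (μ[U (t + 1) | 𝒻 t]) ω = U t ω := by
    intro t ht ω hω
    have hne : U t ω ≠ Z t ω := fun h => hτnot ω t (by omega) ⟨le_of_lt ht, h⟩
    have := hU t ht
    have hmax : U t ω = max (Z t ω) ((μ[U (t + 1) | 𝒻 t]) ω) := by
      rw [this]
    rcases max_cases (Z t ω) ((μ[U (t + 1) | 𝒻 t]) ω) with ⟨h1, _⟩ | ⟨h1, _⟩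
    · exact absurd (hmax.trans h1) hne
    · rw [hmax, h1]
  -- conclude
  have hzero : ∀ (W : Ω → ℝ), ∫ ω in {ω : Ω | 0 ≤ τstar ω}, W ω ∂μ = ∫ ω, W ω ∂μ := by
    intro W
    have : {ω : Ω | 0 ≤ τstar ω} = Set.univ := by ext ω; simp
    rw [this, setIntegral_univ]
  refine ⟨hst, hτT, ?_, ?_⟩
  · rw [stmt6_sum_decomp T Z hZint 𝒻 τstar hst hτT]
    have := stmt6_key 𝒻 T Z U hZint hUint hUT τstar hst hτT htouch hopt 0 (Nat.zero_le T)
    rw [this]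
    have huniv : {ω : Ω | 0 ≤ τstar ω} = Set.univ := by ext ω; simp
    rw [huniv, setIntegral_univ]
  · intro τ hτ hτle
    rw [stmt6_sum_decomp T Z hZint 𝒻 τ hτ hτle]
    have := stmt6_key_le 𝒻 T Z U hZint hUint hUT hZU hCU τ hτ hτle 0 (Nat.zero_le T)
    refine le_trans this ?_
    have huniv : {ω : Ω | 0 ≤ τ ω} = Set.univ := by ext ω; simp
    rw [huniv, setIntegral_univ]
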